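/- In a frame L, for any element a, the pseudocomplement of the principal filter ↑a in the frame of filters is {x ∈ L : x ∨ a = 1}. -/
import Mathlib

/-- A filter of a frame: contains ⊤, upward closed, closed under binary meets. -/
def IsFrameFilter {L : Type*} [Order.Frame L] (F : Set L) : Prop :=
  ⊤ ∈ F ∧ (∀ x ∈ F, ∀ y : L, x ≤ y → y ∈ F) ∧ ∀ x ∈ F, ∀ y ∈ F, x ⊓ y ∈ F

/-- In the frame of filters of a frame `L`, the pseudocomplement of the principal
filter `↑a` is `{x | x ⊔ a = ⊤}`: this set is a filter and it is the largest filter `G`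
with `↑a ∩ G ⊆ {⊤}` (the bottom filter). -/
theorem stmt1 {L : Type*} [Order.Frame L] (a : L) :
    IsFrameFilter {x : L | x ⊔ a = ⊤} ∧
    ∀ G : Set L, IsFrameFilter G →
      (Set.Ici a ∩ G ⊆ {(⊤ : L)} ↔ G ⊆ {x : L | x ⊔ a = ⊤}) := by
  constructor
  · refine ⟨by simp, ?_, ?_⟩
    · intro x hx y hxy
      simp only [Set.mem_setOf_eq] at hx ⊢
      exact top_unique (hx ▸ sup_le_sup_right hxy a)
    · intro x hx y hy
      simp only [Set.mem_setOf_eq] at hx hy ⊢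
      rw [sup_inf_right, hx, hy, inf_top_eq]
  · intro G ⟨htop, hup, hinf⟩
    constructor
    · intro h x hx
      have : x ⊔ a ∈ Set.Ici a ∩ G := ⟨le_sup_right, hup x hx _ le_sup_left⟩
      exact h this
    · intro h z ⟨hz1, hz2⟩
      have := h hz2
      simp only [Set.mem_setOf_eq] at this
      have : z = ⊤ := by rw [← this, sup_eq_left.mpr hz1]
      exact this
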